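/- For every real θ with 0 ≤ θ < 1, the function l(θ) = (π/2)·θ·(1−θ)/cos²((π/2)·θ) − tan((π/2)·θ) satisfies l(θ) ≤ 0. -/

import Mathlib

open Real

lemma key_half (t : ℝ) (h0 : 0 ≤ t) (h1 : t ≤ π/2) :
    t * (π - t) / π ≤ Real.sin t := by
  have hπ : (3.141592 : ℝ) < π := Real.pi_gt_d6
  have hπ' : π < 3.15 := Real.pi_lt_d2
  rcases le_or_gt t 1 with hle | hgt
  · rcases eq_or_lt_of_le h0 with rfl | hpos
    · simp
    · have : t - t ^ 3 / 4 < Real.sin t := by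
        have := Real.sin_gt_sub_cube hpos; nlinarith [pow_pos hpos 3]
      have h4 : t * (π - t) / π ≤ t - t ^ 3 / 4 := by
        rw [div_le_iff₀ (by linarith)]
        have h5 : t * π ≤ 4 := by nlinarith
        nlinarith [mul_nonneg (mul_nonneg h0 h0) (sub_nonneg.mpr h5)]
      linarith
  · have hu : Real.sin t = Real.cos (π/2 - t) := (Real.cos_pi_div_two_sub t).symm
    set u := π/2 - t with hu'
    have hu0 : 0 ≤ u := by simp [hu']; linarith
    have hub : u ≤ π/2 - 1 := by simp [hu']; linarith
    have hc : 1 - u ^ 2 / 2 ≤ Real.cos u := Real.one_sub_sq_div_two_le_cos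
    rw [hu, div_le_iff₀ (by linarith)]
    have : t = π/2 - u := by rw [hu']; ring
    rw [this]
    nlinarith [sq_nonneg u, mul_self_nonneg (π/2 - 1 - u)]

lemma key (t : ℝ) (h0 : 0 ≤ t) (h1 : t ≤ π) :
    t * (π - t) / π ≤ Real.sin t := by
  rcases le_or_gt t (π/2) with h | h
  · exact key_half t h0 h
  · have := key_half (π - t) (by linarith) (by linarith)
    rw [Real.sin_pi_sub] at this
    calc t * (π - t) / π = (π - t) * (π - (π - t)) / π := by ring_nf
    _ ≤ Real.sin t := this

/-- l(θ) = (π/2)·θ(1−θ)/cos²((π/2)θ) − tan((π/2)θ) is nonpositive on [0,1). -/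
theorem stmt_5 (l : ℝ → ℝ)
    (hl : ∀ θ, l θ = π/2 * (θ * (1 - θ)) / Real.cos (π/2 * θ) ^ 2 - Real.tan (π/2 * θ)) :
    ∀ θ : ℝ, 0 ≤ θ → θ < 1 → l θ ≤ 0 := by
  intro θ h0 h1
  have hπ : 0 < π := Real.pi_pos
  have hcpos : 0 < Real.cos (π/2 * θ) := by
    apply Real.cos_pos_of_mem_Ioo
    constructor <;> nlinarith
  rw [hl, Real.tan_eq_sin_div_cos, sub_nonpos, div_le_div_iff₀ (by positivity) hcpos]
  have hsin : π * θ * (1 - θ) ≤ Real.sin (π * θ) := by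
    have := key (π * θ) (by positivity) (by nlinarith)
    rw [div_le_iff₀ hπ] at this
    nlinarith
  have h2 : Real.sin (π * θ) = 2 * Real.sin (π/2 * θ) * Real.cos (π/2 * θ) := by
    rw [← Real.sin_two_mul]; ring_nf
  nlinarith [sq_nonneg (Real.cos (π/2 * θ))]
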